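/- Let h : ℝⁿ → ℝ be convex and absolutely homogeneous, x ∈ ℝⁿ with ‖x‖ = 1, and G ∈ ℝⁿ with ⟨x, G⟩ = 0. For each t' with |t'| · h(x) < 1, letting z(t') minimize y ↦ |t'|·h(y) + (1/2)·‖y − (x − t' • G)‖², one has c(t') = ⟨x, z(t')⟩ > 0, so φ(t') = t'/c(t') is well defined; moreover φ is monotonically increasing on this interval, i.e. for all nonzero t'₁ ≠ t'₂ with |t'₁|·h(x) < 1 and |t'₂|·h(x) < 1, (φ(t'₁) − φ(t'₂))·(t'₁ − t'₂) ≥ 0, and φ(0) = 0 (since z(0) = x and hence c(0) = 1). -/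

import Mathlib

open RealInnerProductSpace

section Aux

variable {n : ℕ}

private lemma hom_zero' (h : EuclideanSpace ℝ (Fin n) → ℝ)
    (hhom : ∀ (α : ℝ) (x : EuclideanSpace ℝ (Fin n)), h (α • x) = |α| * h x) :
    h 0 = 0 := by
  have := hhom 0 0
  simpa using this

private lemma hom_subadd' (h : EuclideanSpace ℝ (Fin n) → ℝ)
    (hconv : ConvexOn ℝ Set.univ h)
    (hhom : ∀ (α : ℝ) (x : EuclideanSpace ℝ (Fin n)), h (α • x) = |α| * h x)
    (a b : EuclideanSpace ℝ (Fin n)) : h (a + b) ≤ h a + h b := by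
  have hmid := hconv.2 (Set.mem_univ a) (Set.mem_univ b)
    (by norm_num : (0:ℝ) ≤ 1/2) (by norm_num : (0:ℝ) ≤ 1/2) (by norm_num)
  have he : a + b = (2:ℝ) • ((1/2:ℝ) • a + (1/2:ℝ) • b) := by
    rw [smul_add, smul_smul, smul_smul]; norm_num
  rw [he, hhom]
  simp only [smul_eq_mul] at hmid
  rw [abs_of_pos (by norm_num : (0:ℝ) < 2)]
  linarith

private lemma core_mono' (x G' g₁ g₂ : EuclideanSpace ℝ (Fin n)) (τ₁ τ₂ : ℝ)
    (hτ₂ : 0 < τ₂) (hτ : τ₂ < τ₁) (hx : ‖x‖ = 1)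
    (h₁ : ⟪g₂ - g₁, x - τ₁ • (G' + g₁)⟫ ≤ 0)
    (h₂ : ⟪g₁ - g₂, x - τ₂ • (G' + g₂)⟫ ≤ 0) :
    ⟪x, g₂ - g₁⟫ ≤ 1/τ₂ - 1/τ₁ := by
  set d := g₂ - g₁ with hd
  have hτ₁ : 0 < τ₁ := hτ₂.trans hτ
  have e1 : ⟪d, x⟫ - τ₁ * (⟪d, G'⟫ + ⟪d, g₁⟫) ≤ 0 := by
    have := h₁
    rw [inner_sub_right, real_inner_smul_right, inner_add_right] at this
    linarith
  have e2 : -⟪d, x⟫ + τ₂ * (⟪d, G'⟫ + ⟪d, g₂⟫) ≤ 0 := by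
    have := h₂
    rw [show g₁ - g₂ = -d by rw [hd]; abel] at this
    rw [inner_neg_left, inner_sub_right, real_inner_smul_right, inner_add_right] at this
    linarith
  have edd : ⟪d, g₂⟫ - ⟪d, g₁⟫ = ‖d‖^2 := by
    rw [← real_inner_self_eq_norm_sq, hd, inner_sub_right]
  have hcs : ⟪d, x⟫ ≤ ‖d‖ := by
    have := real_inner_le_norm d x
    rw [hx] at this; linarith
  have hsymm : ⟪x, d⟫ = ⟪d, x⟫ := real_inner_comm d x
  rw [hsymm]
  set u := ⟪d, x⟫
  set s := ⟪d, G'⟫ + ⟪d, g₁⟫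
  have hA : u ≤ τ₁ * s := by linarith
  have hB : τ₂ * (s + ‖d‖^2) ≤ u := by
    have : ⟪d, G'⟫ + ⟪d, g₂⟫ = s + ‖d‖^2 := by
      simp only [s]; linarith [edd]
    nlinarith [e2]
  rcases le_or_gt u 0 with hu | hu
  · have : 0 < 1/τ₂ - 1/τ₁ := by
      rw [sub_pos]; exact one_div_lt_one_div_of_lt hτ₂ hτ
    linarith
  · have h1 : u^2 ≤ ‖d‖^2 := by nlinarith [norm_nonneg d]
    have h2 : τ₁ * τ₂ * ‖d‖^2 ≤ τ₁ * u - τ₂ * u := by nlinarith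
    have h3 : τ₁ * τ₂ * u^2 ≤ τ₁ * u - τ₂ * u := by
      nlinarith [mul_le_mul_of_nonneg_left h1 (le_of_lt (mul_pos hτ₁ hτ₂))]
    have : u ≤ 1/τ₂ - 1/τ₁ := by
      rw [div_sub_div _ _ (ne_of_gt hτ₂) (ne_of_gt hτ₁), le_div_iff₀ (by positivity)]
      nlinarith
    exact this

/-- Variational inequality from the minimizer property. -/
private lemma var_ineq' (h : EuclideanSpace ℝ (Fin n) → ℝ)
    (hconv : ConvexOn ℝ Set.univ h)
    (t : ℝ) (w zz : EuclideanSpace ℝ (Fin n))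
    (hmin : ∀ y, |t| * h zz + (1/2) * ‖zz - w‖^2 ≤ |t| * h y + (1/2) * ‖y - w‖^2)
    (y : EuclideanSpace ℝ (Fin n)) :
    ⟪w - zz, y - zz⟫ ≤ |t| * (h y - h zz) := by
  refine le_of_forall_pos_le_add (fun ε hε => ?_)
  set lam : ℝ := min 1 (2*ε/(‖y - zz‖^2 + 1)) with hlam
  have hden : (0:ℝ) < ‖y - zz‖^2 + 1 := by positivity
  have hlam0 : 0 < lam := lt_min one_pos (by positivity)
  have hlam1 : lam ≤ 1 := min_le_left _ _
  have key := hmin (zz + lam • (y - zz))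
  have hconvpt : h (zz + lam • (y - zz)) ≤ (1 - lam) * h zz + lam * h y := by
    have he : zz + lam • (y - zz) = (1 - lam) • zz + lam • y := by
      rw [smul_sub, sub_smul, one_smul]; abel
    rw [he]
    have := hconv.2 (Set.mem_univ zz) (Set.mem_univ y)
      (by linarith : (0:ℝ) ≤ 1 - lam) (le_of_lt hlam0) (by ring)
    simpa using this
  have hnorm : ‖zz + lam • (y - zz) - w‖^2
      = ‖zz - w‖^2 + 2 * (lam * ⟪zz - w, y - zz⟫) + lam^2 * ‖y - zz‖^2 := by
    have he : zz + lam • (y - zz) - w = (zz - w) + lam • (y - zz) := by abel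
    rw [he, norm_add_sq_real, real_inner_smul_right, norm_smul]
    rw [Real.norm_eq_abs, mul_pow, sq_abs]
  rw [hnorm] at key
  have habs : 0 ≤ |t| := abs_nonneg t
  have step : 0 ≤ |t| * lam * (h y - h zz) + lam * ⟪zz - w, y - zz⟫ + lam^2/2 * ‖y - zz‖^2 := by
    nlinarith [key, hconvpt, mul_le_mul_of_nonneg_left hconvpt habs]
  have hdiv : ⟪w - zz, y - zz⟫ ≤ |t| * (h y - h zz) + lam/2 * ‖y - zz‖^2 := by
    have hflip : ⟪w - zz, y - zz⟫ = -⟪zz - w, y - zz⟫ := by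
      rw [show w - zz = -(zz - w) by abel, inner_neg_left]
    rw [hflip]
    nlinarith [step, sq_nonneg lam]
  have hlast : lam/2 * ‖y - zz‖^2 ≤ ε := by
    have h1 : lam ≤ 2*ε/(‖y - zz‖^2 + 1) := min_le_right _ _
    have h2 : lam * (‖y - zz‖^2 + 1) ≤ 2*ε := by
      rw [← le_div_iff₀ hden]; exact h1
    nlinarith [sq_nonneg (‖y - zz‖), hlam0]
  linarith

/-- Subgradient facts: `⟪w - z, y⟫ ≤ |t| h y` for all `y`, with equality at `y = z`. -/
private lemma subgrad' (h : EuclideanSpace ℝ (Fin n) → ℝ)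
    (hconv : ConvexOn ℝ Set.univ h)
    (hhom : ∀ (α : ℝ) (x : EuclideanSpace ℝ (Fin n)), h (α • x) = |α| * h x)
    (t : ℝ) (w zz : EuclideanSpace ℝ (Fin n))
    (hmin : ∀ y, |t| * h zz + (1/2) * ‖zz - w‖^2 ≤ |t| * h y + (1/2) * ‖y - w‖^2) :
    (∀ y, ⟪w - zz, y⟫ ≤ |t| * h y) ∧ ⟪w - zz, zz⟫ = |t| * h zz := by
  have hlow : |t| * h zz ≤ ⟪w - zz, zz⟫ := by
    have := var_ineq' h hconv t w zz hmin 0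
    rw [hom_zero' h hhom] at this
    rw [zero_sub, inner_neg_right] at this
    linarith
  have hup : ⟪w - zz, zz⟫ ≤ |t| * h zz := by
    have := var_ineq' h hconv t w zz hmin ((2:ℝ) • zz)
    rw [hhom 2 zz, show (2:ℝ) • zz - zz = zz by rw [two_smul]; abel] at this
    rw [abs_of_pos (by norm_num : (0:ℝ) < 2)] at this
    linarith
  have heq : ⟪w - zz, zz⟫ = |t| * h zz := le_antisymm hup hlow
  refine ⟨fun y => ?_, heq⟩
  have := var_ineq' h hconv t w zz hmin y
  rw [inner_sub_right] at this
  rw [heq] at this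
  linarith

end Aux

set_option maxHeartbeats 1000000 in
/-- The proxy step-size to actual step-size mapping `φ(t') = t'/c(t')`:
for `|t'|·h(x) < 1` one has `c(t') = ⟨x, z(t')⟩ > 0`; `φ` is monotonically
increasing on this interval; and `z(0) = x`, `c(0) = 1`, `φ(0) = 0`. -/
theorem phi_monotone_on_interval {n : ℕ} (h : EuclideanSpace ℝ (Fin n) → ℝ)
    (hconv : ConvexOn ℝ Set.univ h)
    (hhom : ∀ (α : ℝ) (x : EuclideanSpace ℝ (Fin n)), h (α • x) = |α| * h x)
    (x G : EuclideanSpace ℝ (Fin n)) (hx : ‖x‖ = 1) (hxG : ⟪x, G⟫ = 0)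
    (z : ℝ → EuclideanSpace ℝ (Fin n))
    (hz : ∀ t' : ℝ, |t'| * h x < 1 → ∀ y,
      |t'| * h (z t') + (1/2) * ‖z t' - (x - t' • G)‖^2 ≤
        |t'| * h y + (1/2) * ‖y - (x - t' • G)‖^2) :
    (∀ t' : ℝ, |t'| * h x < 1 → 0 < ⟪x, z t'⟫) ∧
    (∀ t'₁ t'₂ : ℝ, t'₁ ≠ 0 → t'₂ ≠ 0 → t'₁ ≠ t'₂ →
      |t'₁| * h x < 1 → |t'₂| * h x < 1 →
      0 ≤ (t'₁ / ⟪x, z t'₁⟫ - t'₂ / ⟪x, z t'₂⟫) * (t'₁ - t'₂)) ∧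
    z 0 = x ∧ ⟪x, z 0⟫ = 1 ∧ (0 : ℝ) / ⟪x, z 0⟫ = 0 := by
  have hxx : ⟪x, x⟫ = 1 := by
    rw [real_inner_self_eq_norm_sq, hx]; norm_num
  -- inner product of x with w(t) is 1
  have hxw : ∀ t : ℝ, ⟪x, x - t • G⟫ = 1 := by
    intro t
    rw [inner_sub_right, real_inner_smul_right, hxG, hxx]; ring
  -- positivity of c(t)
  have hcpos : ∀ t' : ℝ, |t'| * h x < 1 → 0 < ⟪x, z t'⟫ := by
    intro t ht
    have hVI := var_ineq' h hconv t (x - t • G) (z t) (hz t ht) (z t + x)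
    have hxx' : h (z t + x) ≤ h (z t) + h x := hom_subadd' h hconv hhom (z t) x
    rw [show z t + x - z t = x by abel] at hVI
    have habs : 0 ≤ |t| := abs_nonneg t
    have h3 : ⟪x - t • G - z t, x⟫ ≤ |t| * h x := by
      nlinarith [mul_le_mul_of_nonneg_left hxx' habs]
    have h4 : ⟪x - t • G - z t, x⟫ = 1 - ⟪x, z t⟫ := by
      rw [inner_sub_left, inner_sub_left, real_inner_smul_left,
        real_inner_comm x G, hxG, hxx, real_inner_comm x (z t)]
      ring
    rw [h4] at h3
    linarith
  -- the monotonicity helper for t₂ < t₁, both nonzero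
  have hmono : ∀ t₁ t₂ : ℝ, t₁ ≠ 0 → t₂ ≠ 0 → t₂ < t₁ →
      |t₁| * h x < 1 → |t₂| * h x < 1 →
      t₂ / ⟪x, z t₂⟫ ≤ t₁ / ⟪x, z t₁⟫ := by
    intro t₁ t₂ h1 h2 hlt hb1 hb2
    have hc1 : 0 < ⟪x, z t₁⟫ := hcpos t₁ hb1
    have hc2 : 0 < ⟪x, z t₂⟫ := hcpos t₂ hb2
    rcases lt_trichotomy t₂ 0 with ht2 | ht2 | ht2
    · rcases lt_trichotomy t₁ 0 with ht1 | ht1 | ht1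
      · -- both negative : t₂ < t₁ < 0
        set g₁ := |t₁|⁻¹ • (x - t₁ • G - z t₁) with hg1
        set g₂ := |t₂|⁻¹ • (x - t₂ • G - z t₂) with hg2
        obtain ⟨hs1, he1⟩ := subgrad' h hconv hhom t₁ (x - t₁ • G) (z t₁) (hz t₁ hb1)
        obtain ⟨hs2, he2⟩ := subgrad' h hconv hhom t₂ (x - t₂ • G) (z t₂) (hz t₂ hb2)
        have ha1 : |t₁| = -t₁ := abs_of_neg ht1
        have ha2 : |t₂| = -t₂ := abs_of_neg ht2
        have ha1p : (0:ℝ) < |t₁| := by rw [ha1]; linarith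
        have ha2p : (0:ℝ) < |t₂| := by rw [ha2]; linarith
        -- z tᵢ = x - |tᵢ| • (-G + gᵢ)
        have hz1 : z t₁ = x - |t₁| • ((-G) + g₁) := by
          rw [hg1, smul_add, smul_smul, mul_inv_cancel₀ (ne_of_gt ha1p), one_smul, ha1]
          module
        have hz2 : z t₂ = x - |t₂| • ((-G) + g₂) := by
          rw [hg2, smul_add, smul_smul, mul_inv_cancel₀ (ne_of_gt ha2p), one_smul, ha2]
          module
        -- subgradient inequalities for core_mono: big τ is |t₂|, small is |t₁|
        have key1 : ⟪g₁ - g₂, x - |t₂| • ((-G) + g₂)⟫ ≤ 0 := by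
          rw [← hz2, inner_sub_left]
          have a1 : ⟪g₁, z t₂⟫ ≤ h (z t₂) := by
            rw [hg1, real_inner_smul_left]
            calc |t₁|⁻¹ * ⟪x - t₁ • G - z t₁, z t₂⟫
                ≤ |t₁|⁻¹ * (|t₁| * h (z t₂)) := by
                  apply mul_le_mul_of_nonneg_left (hs1 (z t₂)) (le_of_lt (inv_pos.mpr ha1p))
              _ = h (z t₂) := by field_simp
          have a2 : ⟪g₂, z t₂⟫ = h (z t₂) := by
            rw [hg2, real_inner_smul_left, he2]
            field_simp
          linarith
        have key2 : ⟪g₂ - g₁, x - |t₁| • ((-G) + g₁)⟫ ≤ 0 := by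
          rw [← hz1, inner_sub_left]
          have a1 : ⟪g₂, z t₁⟫ ≤ h (z t₁) := by
            rw [hg2, real_inner_smul_left]
            calc |t₂|⁻¹ * ⟪x - t₂ • G - z t₂, z t₁⟫
                ≤ |t₂|⁻¹ * (|t₂| * h (z t₁)) := by
                  apply mul_le_mul_of_nonneg_left (hs2 (z t₁)) (le_of_lt (inv_pos.mpr ha2p))
              _ = h (z t₁) := by field_simp
          have a2 : ⟪g₁, z t₁⟫ = h (z t₁) := by
            rw [hg1, real_inner_smul_left, he1]
            field_simp
          linarith
        have hcore := core_mono' x (-G) g₂ g₁ |t₂| |t₁|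
          (ha1p) (by rw [ha1, ha2]; linarith) hx key1 key2
        -- ⟪x, g₁ - g₂⟫ ≤ 1/|t₁| - 1/|t₂|
        have hu : ⟪x, g₁⟫ - ⟪x, g₂⟫ ≤ 1/|t₁| - 1/|t₂| := by
          rw [← inner_sub_right]; exact hcore
        -- c values
        have hc1e : ⟪x, z t₁⟫ = 1 - |t₁| * ⟪x, g₁⟫ := by
          rw [hz1, inner_sub_right, real_inner_smul_right, inner_add_right,
            inner_neg_right, hxG, hxx]; ring
        have hc2e : ⟪x, z t₂⟫ = 1 - |t₂| * ⟪x, g₂⟫ := by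
          rw [hz2, inner_sub_right, real_inner_smul_right, inner_add_right,
            inner_neg_right, hxG, hxx]; ring
        rw [div_le_div_iff₀ hc2 hc1, hc1e, hc2e, ha1, ha2]
        rw [ha1, ha2] at hu
        have hmul : (-t₁) * (-t₂) * (1/(-t₁) - 1/(-t₂)) = -t₂ + t₁ := by
          field_simp [h1, h2]; ring
        nlinarith [mul_le_mul_of_nonneg_left hu (by nlinarith : (0:ℝ) ≤ (-t₁)*(-t₂))]
      · exact absurd ht1 h1
      · -- t₂ < 0 < t₁ : cross sign, easy
        have hl : t₂ / ⟪x, z t₂⟫ < 0 := div_neg_of_neg_of_pos ht2 hc2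
        have hr : 0 < t₁ / ⟪x, z t₁⟫ := div_pos ht1 hc1
        linarith
    · exact absurd ht2 h2
    · -- both positive : 0 < t₂ < t₁
      have ht1 : 0 < t₁ := lt_trans ht2 hlt
      set g₁ := |t₁|⁻¹ • (x - t₁ • G - z t₁) with hg1
      set g₂ := |t₂|⁻¹ • (x - t₂ • G - z t₂) with hg2
      obtain ⟨hs1, he1⟩ := subgrad' h hconv hhom t₁ (x - t₁ • G) (z t₁) (hz t₁ hb1)
      obtain ⟨hs2, he2⟩ := subgrad' h hconv hhom t₂ (x - t₂ • G) (z t₂) (hz t₂ hb2)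
      have ha1 : |t₁| = t₁ := abs_of_pos ht1
      have ha2 : |t₂| = t₂ := abs_of_pos ht2
      have ha1p : (0:ℝ) < |t₁| := by rw [ha1]; linarith
      have ha2p : (0:ℝ) < |t₂| := by rw [ha2]; linarith
      have hz1 : z t₁ = x - |t₁| • (G + g₁) := by
        rw [hg1, smul_add, smul_smul, mul_inv_cancel₀ (ne_of_gt ha1p), one_smul, ha1]
        module
      have hz2 : z t₂ = x - |t₂| • (G + g₂) := by
        rw [hg2, smul_add, smul_smul, mul_inv_cancel₀ (ne_of_gt ha2p), one_smul, ha2]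
        module
      have key1 : ⟪g₂ - g₁, x - |t₁| • (G + g₁)⟫ ≤ 0 := by
        rw [← hz1, inner_sub_left]
        have a1 : ⟪g₂, z t₁⟫ ≤ h (z t₁) := by
          rw [hg2, real_inner_smul_left]
          calc |t₂|⁻¹ * ⟪x - t₂ • G - z t₂, z t₁⟫
              ≤ |t₂|⁻¹ * (|t₂| * h (z t₁)) := by
                apply mul_le_mul_of_nonneg_left (hs2 (z t₁)) (le_of_lt (inv_pos.mpr ha2p))
            _ = h (z t₁) := by field_simp
        have a2 : ⟪g₁, z t₁⟫ = h (z t₁) := by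
          rw [hg1, real_inner_smul_left, he1]
          field_simp
        linarith
      have key2 : ⟪g₁ - g₂, x - |t₂| • (G + g₂)⟫ ≤ 0 := by
        rw [← hz2, inner_sub_left]
        have a1 : ⟪g₁, z t₂⟫ ≤ h (z t₂) := by
          rw [hg1, real_inner_smul_left]
          calc |t₁|⁻¹ * ⟪x - t₁ • G - z t₁, z t₂⟫
              ≤ |t₁|⁻¹ * (|t₁| * h (z t₂)) := by
                apply mul_le_mul_of_nonneg_left (hs1 (z t₂)) (le_of_lt (inv_pos.mpr ha1p))
            _ = h (z t₂) := by field_simp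
        have a2 : ⟪g₂, z t₂⟫ = h (z t₂) := by
          rw [hg2, real_inner_smul_left, he2]
          field_simp
        linarith
      have hcore := core_mono' x G g₁ g₂ |t₁| |t₂|
        (ha2p) (by rw [ha1, ha2]; linarith) hx key1 key2
      have hu : ⟪x, g₂⟫ - ⟪x, g₁⟫ ≤ 1/|t₂| - 1/|t₁| := by
        rw [← inner_sub_right]; exact hcore
      have hc1e : ⟪x, z t₁⟫ = 1 - |t₁| * ⟪x, g₁⟫ := by
        rw [hz1, inner_sub_right, real_inner_smul_right, inner_add_right, hxG, hxx]; ring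
      have hc2e : ⟪x, z t₂⟫ = 1 - |t₂| * ⟪x, g₂⟫ := by
        rw [hz2, inner_sub_right, real_inner_smul_right, inner_add_right, hxG, hxx]; ring
      rw [div_le_div_iff₀ hc2 hc1, hc1e, hc2e, ha1, ha2]
      rw [ha1, ha2] at hu
      have hmul : t₁ * t₂ * (1/t₂ - 1/t₁) = t₁ - t₂ := by
        field_simp [h1, h2]
      nlinarith [mul_le_mul_of_nonneg_left hu (by nlinarith : (0:ℝ) ≤ t₁*t₂)]
  -- z 0 = x
  have hz0 : z 0 = x := by
    have hb0 : |(0:ℝ)| * h x < 1 := by norm_num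
    have := hz 0 hb0 x
    simp only [abs_zero, zero_mul, zero_add, zero_smul, sub_zero, sub_self, norm_zero] at this
    have h5 : ‖z 0 - x‖^2 ≤ 0 := by nlinarith
    have h6 : ‖z 0 - x‖ = 0 := by nlinarith [norm_nonneg (z 0 - x), sq_nonneg (‖z 0 - x‖)]
    have := norm_eq_zero.mp h6
    rwa [sub_eq_zero] at this
  refine ⟨hcpos, ?_, hz0, by rw [hz0]; exact hxx, by rw [hz0, hxx]; norm_num⟩
  intro t₁ t₂ h1 h2 hne hb1 hb2
  rcases hne.lt_or_gt with hlt | hlt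
  · have := hmono t₂ t₁ h2 h1 hlt hb2 hb1
    have : t₁ / ⟪x, z t₁⟫ - t₂ / ⟪x, z t₂⟫ ≤ 0 := by linarith
    nlinarith
  · have := hmono t₁ t₂ h1 h2 hlt hb1 hb2
    exact mul_nonneg (by linarith) (by linarith)
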